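/- The nuclear norm is the tightest convex envelope of the rank on the spectral-norm unit ball: (a) for every A : Matrix (Fin m) (Fin n) ℝ with spectral norm ‖A‖₂ ≤ 1, one has ‖A‖_* ≤ rank(A) (rank regarded as a real number); and (b) if g is any real-valued function on m × n real matrices that is convex on the ball B = {A : ‖A‖₂ ≤ 1} and satisfies g(A) ≤ rank(A) for all A ∈ B, then g(A) ≤ ‖A‖_* for all A ∈ B. -/

import Mathlib

/-- The spectral norm (largest singular value) of a real matrix: the `L2` operator norm
of the associated Euclidean linear map. -/
noncomputable def matSpectralNorm {m n : ℕ} (A : Matrix (Fin m) (Fin n) ℝ) : ℝ :=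
  ‖LinearMap.toContinuousLinearMap (Matrix.toEuclideanLin A)‖

/-- The nuclear norm (sum of singular values) of a real matrix: the trace of the
positive-semidefinite square root of `Aᴴ * A` (over `ℝ`, `Aᴴ = Aᵀ`). -/
noncomputable def nuclearNorm {m n : ℕ} (A : Matrix (Fin m) (Fin n) ℝ) : ℝ :=
  ((Matrix.posSemidef_conjTranspose_mul_self A).1.eigenvectorUnitary.1 *
    Matrix.diagonal ((RCLike.ofReal : ℝ → ℝ) ∘ (√·) ∘ (Matrix.posSemidef_conjTranspose_mul_self A).1.eigenvalues) *
    (star (Matrix.posSemidef_conjTranspose_mul_self A).1.eigenvectorUnitary :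
      Matrix (Fin n) (Fin n) ℝ)).trace

section NNAux

open Matrix Finset
open scoped RealInnerProductSpace

/-- the matrix `∑ i, s i • u i * (v i)ᵀ`. -/
private noncomputable def TTnn {m n : ℕ} (u : Fin n → EuclideanSpace ℝ (Fin m))
    (v : Fin n → EuclideanSpace ℝ (Fin n)) (s : Fin n → ℝ) : Matrix (Fin m) (Fin n) ℝ :=
  ∑ i, s i • Matrix.vecMulVec (WithLp.equiv 2 (Fin m → ℝ) (u i)) (WithLp.equiv 2 (Fin n → ℝ) (v i))

private theorem TTnn_apply {m n : ℕ} (u : Fin n → EuclideanSpace ℝ (Fin m))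
    (v : Fin n → EuclideanSpace ℝ (Fin n)) (s : Fin n → ℝ) (x : EuclideanSpace ℝ (Fin n)) :
    Matrix.toEuclideanLin (TTnn u v s) x = ∑ i, (s i * ⟪v i, x⟫) • u i := by
  have hinner : ∀ i, ⟪v i, x⟫ = ∑ k, v i k * x k := by
    intro i; simp [PiLp.inner_apply, RCLike.inner_apply]
    exact Finset.sum_congr rfl fun _ _ => mul_comm _ _
  apply (WithLp.equiv 2 (Fin m → ℝ)).injective
  have hcoe : ⇑(WithLp.equiv 2 (Fin m → ℝ)) = ⇑(WithLp.linearEquiv 2 ℝ (Fin m → ℝ)) := rfl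
  rw [hcoe, map_sum]
  funext j
  simp only [Matrix.toEuclideanLin_apply, Equiv.apply_symm_apply, TTnn, Finset.sum_apply,
    Pi.smul_apply, Matrix.mulVec, dotProduct, Matrix.sum_apply, Matrix.smul_apply,
    Matrix.vecMulVec_apply, Finset.sum_mul, smul_eq_mul, hinner, _root_.map_smul,
    WithLp.linearEquiv_apply]
  show ((∑ i, s i • Matrix.vecMulVec (u i).ofLp (v i).ofLp) *ᵥ x.ofLp) j = ∑ i, (s i * ∑ k, v i k * x k) * u i j
  simp only [Matrix.mulVec, dotProduct, Matrix.sum_apply, Matrix.smul_apply,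
    Matrix.vecMulVec_apply, Finset.sum_mul, smul_eq_mul]
  rw [Finset.sum_comm]
  refine Finset.sum_congr rfl fun i _ => ?_
  show _ = (s i * ∑ k, v i k * x k) * (u i j)
  rw [Finset.mul_sum, Finset.sum_mul]
  refine Finset.sum_congr rfl fun k _ => ?_
  show s i * (u i j * v i k) * x k = s i * (v i k * x k) * u i j
  ring

private theorem TTnn_comb {m n : ℕ} (u : Fin n → EuclideanSpace ℝ (Fin m))
    (v : Fin n → EuclideanSpace ℝ (Fin n)) (s t : Fin n → ℝ) (a b : ℝ) :
    TTnn u v (fun i => a * s i + b * t i) = a • TTnn u v s + b • TTnn u v t := by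
  simp only [TTnn, Finset.smul_sum, smul_smul, ← Finset.sum_add_distrib, add_smul]

/-- Spectral norm bound for `TTnn` when the `u i` are pairwise orthogonal of norm at most one,
`v` is an orthonormal basis and `|s i| ≤ 1`. -/
private theorem spectralNorm_TTnn_le {m n : ℕ} {u : Fin n → EuclideanSpace ℝ (Fin m)}
    (hu : ∀ i j, i ≠ j → ⟪u i, u j⟫ = 0) (hu1 : ∀ i, ‖u i‖ ≤ 1)
    (v : OrthonormalBasis (Fin n) ℝ (EuclideanSpace ℝ (Fin n)))
    {s : Fin n → ℝ} (hs : ∀ i, |s i| ≤ 1) :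
    matSpectralNorm (TTnn u v s) ≤ 1 := by
  refine ContinuousLinearMap.opNorm_le_bound _ zero_le_one fun x => ?_
  rw [one_mul]
  have hx : LinearMap.toContinuousLinearMap (Matrix.toEuclideanLin (TTnn u v s)) x
      = ∑ i, (s i * ⟪v i, x⟫) • u i := TTnn_apply u (⇑v) s x
  rw [hx]
  set c : Fin n → ℝ := fun i => s i * ⟪v i, x⟫ with hc
  have hnorm2 : ‖∑ i, c i • u i‖ ^ 2 = ∑ i, c i ^ 2 * ‖u i‖ ^ 2 := by
    rw [← real_inner_self_eq_norm_sq, inner_sum]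
    refine Finset.sum_congr rfl fun i _ => ?_
    rw [sum_inner, Finset.sum_eq_single i]
    · rw [real_inner_smul_left, real_inner_smul_right, real_inner_self_eq_norm_sq]; ring
    · intro j _ hj
      rw [real_inner_smul_left, real_inner_smul_right, hu j i hj]; ring
    · intro h; exact absurd (Finset.mem_univ i) h
  have hterm : ∀ i, c i ^ 2 * ‖u i‖ ^ 2 ≤ ⟪v i, x⟫ ^ 2 := by
    intro i
    have h1 : c i ^ 2 ≤ ⟪v i, x⟫ ^ 2 := by
      have := hs i
      rw [hc]
      have habs : |s i * ⟪v i, x⟫| ≤ |⟪v i, x⟫| := by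
        rw [abs_mul]
        calc |s i| * |⟪v i, x⟫| ≤ 1 * |⟪v i, x⟫| :=
              mul_le_mul_of_nonneg_right this (abs_nonneg _)
          _ = |⟪v i, x⟫| := one_mul _
      calc (s i * ⟪v i, x⟫) ^ 2 = |s i * ⟪v i, x⟫| ^ 2 := (sq_abs _).symm
        _ ≤ |⟪v i, x⟫| ^ 2 := by
            exact pow_le_pow_left₀ (abs_nonneg _) habs 2
        _ = ⟪v i, x⟫ ^ 2 := sq_abs _
    have h2 : ‖u i‖ ^ 2 ≤ 1 := by
      have := hu1 i
      nlinarith [norm_nonneg (u i)]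
    nlinarith [sq_nonneg (c i), sq_nonneg ⟪v i, x⟫]
  have hpars : ∑ i, ⟪v i, x⟫ ^ 2 = ‖x‖ ^ 2 := by
    have := v.sum_inner_mul_inner x x
    rw [← real_inner_self_eq_norm_sq, ← this]
    refine Finset.sum_congr rfl fun i _ => ?_
    rw [real_inner_comm x (v i)]; ring
  have hle : ‖∑ i, c i • u i‖ ^ 2 ≤ ‖x‖ ^ 2 := by
    rw [hnorm2, ← hpars]
    exact Finset.sum_le_sum fun i _ => hterm i
  nlinarith [norm_nonneg (∑ i, c i • u i), norm_nonneg x]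

private theorem matrix_rank_add_le {m n : ℕ} (A B : Matrix (Fin m) (Fin n) ℝ) :
    (A + B).rank ≤ A.rank + B.rank := by
  classical
  unfold Matrix.rank
  have hrange : LinearMap.range (A + B).mulVecLin ≤
      LinearMap.range A.mulVecLin ⊔ LinearMap.range B.mulVecLin := by
    rintro y ⟨x, rfl⟩
    rw [Matrix.mulVecLin_add]
    exact Submodule.mem_sup.2 ⟨A.mulVecLin x, ⟨x, rfl⟩, B.mulVecLin x, ⟨x, rfl⟩, rfl⟩
  calc Module.finrank ℝ (LinearMap.range (A + B).mulVecLin)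
      ≤ Module.finrank ℝ ((LinearMap.range A.mulVecLin) ⊔ (LinearMap.range B.mulVecLin) :
          Submodule ℝ (Fin m → ℝ)) := Submodule.finrank_mono hrange
    _ ≤ _ := Submodule.finrank_add_le_finrank_add_finrank _ _

private theorem rank_vecMulVec_le' {m n : ℕ} (w : Fin m → ℝ) (z : Fin n → ℝ) :
    (Matrix.vecMulVec w z).rank ≤ 1 := by
  classical
  unfold Matrix.rank
  have hrange : LinearMap.range (Matrix.vecMulVec w z).mulVecLin ≤ Submodule.span ℝ {w} := by
    rintro y ⟨x, rfl⟩
    have : (Matrix.vecMulVec w z).mulVecLin x = (z ⬝ᵥ x) • w := by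
      ext j
      simp [Matrix.vecMulVec_apply, Matrix.mulVec, dotProduct, Finset.sum_mul,
        Finset.mul_sum, mul_comm, mul_assoc, mul_left_comm]
    rw [this]
    exact Submodule.smul_mem _ _ (Submodule.mem_span_singleton_self w)
  refine le_trans (Submodule.finrank_mono hrange) ?_
  by_cases hw : w = 0
  · subst hw
    rw [Submodule.span_zero_singleton]
    simp
  · rw [finrank_span_singleton hw]

private theorem rank_TTnn_le {m n : ℕ} (u : Fin n → EuclideanSpace ℝ (Fin m))
    (v : Fin n → EuclideanSpace ℝ (Fin n)) (s : Fin n → ℝ) :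
    (TTnn u v s).rank ≤ (Finset.univ.filter fun i => s i ≠ 0).card := by
  classical
  have h1 : TTnn u v s = ∑ i ∈ Finset.univ.filter (fun i => s i ≠ 0),
      s i • Matrix.vecMulVec (WithLp.equiv 2 (Fin m → ℝ) (u i))
        (WithLp.equiv 2 (Fin n → ℝ) (v i)) := by
    rw [TTnn]
    refine (Finset.sum_filter_of_ne fun i _ h => ?_).symm
    intro hs0
    exact h (by rw [hs0, zero_smul])
  rw [h1]
  have key : ∀ (S : Finset (Fin n)),
      (∑ i ∈ S, s i • Matrix.vecMulVec (WithLp.equiv 2 (Fin m → ℝ) (u i))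
        (WithLp.equiv 2 (Fin n → ℝ) (v i))).rank ≤ S.card := by
    intro S
    induction S using Finset.cons_induction with
    | empty => simp
    | cons a S ha ih =>
      rw [Finset.sum_cons, Finset.card_cons]
      refine le_trans (matrix_rank_add_le _ _) ?_
      have hone : (s a • Matrix.vecMulVec (WithLp.equiv 2 (Fin m → ℝ) (u a))
          (WithLp.equiv 2 (Fin n → ℝ) (v a))).rank ≤ 1 := by
        have : s a • Matrix.vecMulVec (WithLp.equiv 2 (Fin m → ℝ) (u a))
            (WithLp.equiv 2 (Fin n → ℝ) (v a))
            = Matrix.vecMulVec (s a • WithLp.equiv 2 (Fin m → ℝ) (u a))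
              (WithLp.equiv 2 (Fin n → ℝ) (v a)) := by
          ext i j
          simp [Matrix.vecMulVec_apply, mul_assoc]
        rw [this]
        exact rank_vecMulVec_le' _ _
      omega
  exact key _

/-- The key convexity induction: if `g` is convex on the spectral ball and dominated by the rank
there, then `g (TTnn u v s) ≤ ∑ i, s i` for `0 ≤ s ≤ 1`. -/
private theorem key_induction {m n : ℕ} {u : Fin n → EuclideanSpace ℝ (Fin m)}
    (hu : ∀ i j, i ≠ j → ⟪u i, u j⟫ = 0) (hu1 : ∀ i, ‖u i‖ ≤ 1)
    (v : OrthonormalBasis (Fin n) ℝ (EuclideanSpace ℝ (Fin n)))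
    {g : Matrix (Fin m) (Fin n) ℝ → ℝ}
    (hg : ConvexOn ℝ {A : Matrix (Fin m) (Fin n) ℝ | matSpectralNorm A ≤ 1} g)
    (hgr : ∀ A : Matrix (Fin m) (Fin n) ℝ, matSpectralNorm A ≤ 1 → g A ≤ (A.rank : ℝ)) :
    ∀ (k : ℕ) (s : Fin n → ℝ), (∀ i, 0 ≤ s i ∧ s i ≤ 1) →
      (Finset.univ.filter fun i => s i ≠ 0).card ≤ k → g (TTnn u v s) ≤ ∑ i, s i := by
  classical
  intro k
  induction k with
  | zero =>
    intro s hs hcard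
    have hS : (Finset.univ.filter fun i => s i ≠ 0) = ∅ := Finset.card_eq_zero.mp (le_antisymm hcard (Nat.zero_le _))
    have hs0 : ∀ i, s i = 0 := by
      intro i
      by_contra h
      have : i ∈ (Finset.univ.filter fun i => s i ≠ 0) := by simp [h]
      rw [hS] at this; exact absurd this (Finset.notMem_empty i)
    have hball : matSpectralNorm (TTnn u v s) ≤ 1 :=
      spectralNorm_TTnn_le hu hu1 v (fun i => by rw [hs0 i]; simp)
    calc g (TTnn u v s) ≤ ((TTnn u v s).rank : ℝ) := hgr _ hball
      _ ≤ ((Finset.univ.filter fun i => s i ≠ 0).card : ℝ) := by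
          exact_mod_cast rank_TTnn_le u (⇑v) s
      _ = 0 := by rw [hS]; simp
      _ ≤ ∑ i, s i := Finset.sum_nonneg fun i _ => (hs i).1
  | succ k ih =>
    intro s hs hcard
    set S := Finset.univ.filter fun i => s i ≠ 0 with hSdef
    by_cases hS : S = ∅
    · -- same as base case
      have hs0 : ∀ i, s i = 0 := by
        intro i
        by_contra h
        have : i ∈ S := by simp [hSdef, h]
        rw [hS] at this; exact absurd this (Finset.notMem_empty i)
      have hball : matSpectralNorm (TTnn u v s) ≤ 1 :=
        spectralNorm_TTnn_le hu hu1 v (fun i => by rw [hs0 i]; simp)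
      calc g (TTnn u v s) ≤ ((TTnn u v s).rank : ℝ) := hgr _ hball
        _ ≤ (S.card : ℝ) := by exact_mod_cast rank_TTnn_le u (⇑v) s
        _ = 0 := by rw [hS]; simp
        _ ≤ ∑ i, s i := Finset.sum_nonneg fun i _ => (hs i).1
    · have hSne : S.Nonempty := Finset.nonempty_of_ne_empty hS
      -- the minimum nonzero value of s
      obtain ⟨i₀, hi₀S, hi₀min⟩ :
          ∃ i₀ ∈ S, ∀ i ∈ S, s i₀ ≤ s i := Finset.exists_min_image S s hSne
      set c := s i₀ with hcdef
      have hc0 : 0 < c := by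
        have : s i₀ ≠ 0 := (Finset.mem_filter.mp hi₀S).2
        exact lt_of_le_of_ne (hs i₀).1 (Ne.symm this)
      have hc1 : c ≤ 1 := (hs i₀).2
      -- indicator of the support
      set e : Fin n → ℝ := fun i => if s i = 0 then 0 else 1 with hedef
      have he_bounds : ∀ i, 0 ≤ e i ∧ e i ≤ 1 := by
        intro i; rw [hedef]; dsimp only; split <;> norm_num
      have he_ball : matSpectralNorm (TTnn u v e) ≤ 1 :=
        spectralNorm_TTnn_le hu hu1 v (fun i => abs_le.2 ⟨by linarith [(he_bounds i).1], (he_bounds i).2⟩)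
      have he_sum : ∑ i, e i = (S.card : ℝ) := by
        have hei : ∀ i, e i = if s i ≠ 0 then (1:ℝ) else 0 := by
          intro i; rw [hedef]; dsimp only; by_cases h : s i = 0 <;> simp [h]
        rw [Finset.sum_congr rfl fun i _ => hei i, Finset.sum_boole, hSdef]
      have hgTe : g (TTnn u v e) ≤ (S.card : ℝ) := by
        have h1 : g (TTnn u v e) ≤ ((TTnn u v e).rank : ℝ) := hgr _ he_ball
        have h2 : (TTnn u v e).rank ≤ (Finset.univ.filter fun i => e i ≠ 0).card :=
          rank_TTnn_le u (⇑v) e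
        have h3 : (Finset.univ.filter fun i => e i ≠ 0) = S := by
          apply Finset.filter_congr
          intro i _
          rw [hedef]; dsimp only
          constructor
          · intro h; by_contra h0; rw [if_pos h0] at h; exact h rfl
          · intro h; rw [if_neg h]; norm_num
        rw [h3] at h2
        calc g (TTnn u v e) ≤ ((TTnn u v e).rank : ℝ) := h1
          _ ≤ (S.card : ℝ) := by exact_mod_cast h2
      by_cases hceq1 : c = 1
      · -- all values on the support are 1, so s = e
        have hse : s = e := by
          funext i
          rw [hedef]; dsimp only
          by_cases h : s i = 0
          · rw [if_pos h, h]
          · rw [if_neg h]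
            have hiS : i ∈ S := by simp [hSdef, h]
            have h1 := hi₀min i hiS
            linarith [(hs i).2]
        rw [hse]
        calc g (TTnn u v e) ≤ (S.card : ℝ) := hgTe
          _ = ∑ i, e i := he_sum.symm
      · have hclt1 : c < 1 := lt_of_le_of_ne hc1 hceq1
        -- the reduced vector
        set s' : Fin n → ℝ := fun i => if s i = 0 then 0 else (s i - c) / (1 - c) with hs'def
        have h1c : (0:ℝ) < 1 - c := by linarith
        have hs'_bounds : ∀ i, 0 ≤ s' i ∧ s' i ≤ 1 := by
          intro i
          rw [hs'def]; dsimp only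
          split
          · norm_num
          · rename_i h
            have hiS : i ∈ S := by simp [hSdef, h]
            have hge := hi₀min i hiS
            constructor
            · apply div_nonneg _ (le_of_lt h1c); linarith
            · rw [div_le_one h1c]; linarith [(hs i).2]
        -- s = c • e + (1-c) • s'
        have hcomb : s = fun i => c * e i + (1 - c) * s' i := by
          funext i
          rw [hedef, hs'def]; dsimp only
          by_cases h : s i = 0
          · rw [if_pos h, if_pos h, h]; ring
          · rw [if_neg h, if_neg h]
            field_simp
            ring
        have hTcomb : TTnn u v s = c • TTnn u v e + (1 - c) • TTnn u v s' := by
          rw [hcomb]; exact TTnn_comb u (⇑v) e s' c (1 - c)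
        -- support of s' is strictly smaller
        have hsupp' : (Finset.univ.filter fun i => s' i ≠ 0) ⊆ S.erase i₀ := by
          intro i hi
          rw [Finset.mem_filter] at hi
          rw [Finset.mem_erase]
          have hsne : s i ≠ 0 := by
            intro h0
            apply hi.2
            rw [hs'def]; dsimp only; rw [if_pos h0]
          refine ⟨?_, by simp [hSdef, hsne]⟩
          intro hii
          apply hi.2
          rw [hs'def]; dsimp only; rw [if_neg hsne, hii, ← hcdef]
          simp
        have hcard' : (Finset.univ.filter fun i => s' i ≠ 0).card ≤ k := by
          have h1 := Finset.card_le_card hsupp'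
          have h2 : (S.erase i₀).card = S.card - 1 := Finset.card_erase_of_mem hi₀S
          have h3 : 1 ≤ S.card := Finset.card_pos.mpr hSne
          omega
        have ih' := ih s' hs'_bounds hcard'
        have hs'_ball : matSpectralNorm (TTnn u v s') ≤ 1 :=
          spectralNorm_TTnn_le hu hu1 v
            (fun i => abs_le.2 ⟨by linarith [(hs'_bounds i).1], (hs'_bounds i).2⟩)
        have hconv := hg.2 (Set.mem_setOf.mpr he_ball) (Set.mem_setOf.mpr hs'_ball)
          (le_of_lt hc0) (by linarith : (0:ℝ) ≤ 1 - c) (by ring)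
        rw [← hTcomb] at hconv
        calc g (TTnn u v s) ≤ c * g (TTnn u v e) + (1 - c) * g (TTnn u v s') := hconv
          _ ≤ c * (S.card : ℝ) + (1 - c) * (∑ i, s' i) := by
              have := mul_le_mul_of_nonneg_left hgTe (le_of_lt hc0)
              have := mul_le_mul_of_nonneg_left ih' (le_of_lt h1c)
              nlinarith [mul_le_mul_of_nonneg_left hgTe (le_of_lt hc0),
                mul_le_mul_of_nonneg_left ih' (le_of_lt h1c)]
          _ = ∑ i, (c * e i + (1 - c) * s' i) := by
              rw [Finset.sum_add_distrib, ← Finset.mul_sum, ← Finset.mul_sum, he_sum]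
          _ = ∑ i, s i := by rw [hcomb]

/-- The nuclear norm is the tightest convex envelope of the rank on the spectral-norm
unit ball: (a) `‖A‖_* ≤ rank A` on the ball, and (b) any convex minorant of the rank
on the ball is bounded above by the nuclear norm there. -/
theorem nuclearNorm_convex_envelope_of_rank {m n : ℕ} :
    (∀ A : Matrix (Fin m) (Fin n) ℝ, matSpectralNorm A ≤ 1 →
      nuclearNorm A ≤ (A.rank : ℝ)) ∧
    (∀ g : Matrix (Fin m) (Fin n) ℝ → ℝ,
      ConvexOn ℝ {A : Matrix (Fin m) (Fin n) ℝ | matSpectralNorm A ≤ 1} g →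
      (∀ A : Matrix (Fin m) (Fin n) ℝ, matSpectralNorm A ≤ 1 → g A ≤ (A.rank : ℝ)) →
      ∀ A : Matrix (Fin m) (Fin n) ℝ, matSpectralNorm A ≤ 1 → g A ≤ nuclearNorm A) := by
  classical
  have setup : ∀ A : Matrix (Fin m) (Fin n) ℝ, matSpectralNorm A ≤ 1 →
      ∃ (u : Fin n → EuclideanSpace ℝ (Fin m))
        (v : OrthonormalBasis (Fin n) ℝ (EuclideanSpace ℝ (Fin n))) (σ : Fin n → ℝ),
        (∀ i j, i ≠ j → ⟪u i, u j⟫ = 0) ∧ (∀ i, ‖u i‖ ≤ 1) ∧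
        (∀ i, 0 ≤ σ i ∧ σ i ≤ 1) ∧ A = TTnn u (⇑v) σ ∧
        nuclearNorm A = ∑ i, σ i ∧
        ((Finset.univ.filter fun i => σ i ≠ 0).card : ℝ) ≤ (A.rank : ℝ) := by
    intro A hA
    have hM := Matrix.posSemidef_conjTranspose_mul_self A
    have hH : (Aᴴ * A).IsHermitian := hM.1
    set μ : Fin n → ℝ := hH.eigenvalues with hμdef
    set v : OrthonormalBasis (Fin n) ℝ (EuclideanSpace ℝ (Fin n)) := hH.eigenvectorBasis
      with hvdef
    set σ : Fin n → ℝ := fun i => Real.sqrt (μ i) with hσdef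
    set L : EuclideanSpace ℝ (Fin n) →ₗ[ℝ] EuclideanSpace ℝ (Fin m) := Matrix.toEuclideanLin A
      with hLdef
    have hμ0 : ∀ i, 0 ≤ μ i := fun i => hM.eigenvalues_nonneg i
    have hadj : ∀ x y : EuclideanSpace ℝ (Fin n),
        ⟪L x, L y⟫ = ⟪x, Matrix.toEuclideanLin (Aᴴ * A) y⟫ := by
      intro x y
      have h : Matrix.toEuclideanLin (Aᴴ * A) y = Matrix.toEuclideanLin Aᴴ (L y) := by
        rw [hLdef]
        simp [Matrix.toEuclideanLin_apply, Matrix.mulVec_mulVec]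
      rw [h, Matrix.toEuclideanLin_conjTranspose_eq_adjoint, LinearMap.adjoint_inner_right]
    have heig : ∀ i, Matrix.toEuclideanLin (Aᴴ * A) (v i) = μ i • v i := by
      intro i
      apply (WithLp.equiv 2 (Fin n → ℝ)).injective
      have h : (Aᴴ * A) *ᵥ (v i).ofLp = μ i • (v i).ofLp := hH.mulVec_eigenvectorBasis i
      simpa [Matrix.toEuclideanLin_apply] using h
    have hLL : ∀ (x : EuclideanSpace ℝ (Fin n)) (i : Fin n),
        ⟪L x, L (v i)⟫ = μ i * ⟪x, v i⟫ := by
      intro x i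
      rw [hadj, heig i, real_inner_smul_right]
    have hvnorm : ∀ i, ‖v i‖ = 1 := fun i => v.orthonormal.1 i
    have hvorth : ∀ i j, i ≠ j → ⟪v i, v j⟫ = 0 := fun i j h => v.orthonormal.2 h
    have hLvnorm : ∀ i, ⟪L (v i), L (v i)⟫ = μ i := by
      intro i
      rw [hLL (v i) i, real_inner_self_eq_norm_sq, hvnorm i]
      ring
    set u : Fin n → EuclideanSpace ℝ (Fin m) :=
      fun i => if _ : μ i = 0 then 0 else (σ i)⁻¹ • L (v i) with hudef
    have hσ0 : ∀ i, 0 ≤ σ i := fun i => Real.sqrt_nonneg _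
    have hσpos : ∀ i, μ i ≠ 0 → 0 < σ i := by
      intro i h
      exact Real.sqrt_pos.mpr (lt_of_le_of_ne (hμ0 i) (Ne.symm h))
    have hLvn : ∀ i, ‖L (v i)‖ = σ i := by
      intro i
      rw [hσdef]
      dsimp only
      rw [← hLvnorm i, real_inner_self_eq_norm_sq]
      exact (Real.sqrt_sq (norm_nonneg _)).symm
    have hLv : ∀ i, L (v i) = σ i • u i := by
      intro i
      rw [hudef]
      dsimp only
      by_cases h : μ i = 0
      · rw [dif_pos h, smul_zero]
        have : ⟪L (v i), L (v i)⟫ = 0 := by rw [hLvnorm i, h]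
        exact inner_self_eq_zero.mp this
      · rw [dif_neg h, smul_smul, mul_inv_cancel₀ (ne_of_gt (hσpos i h)), one_smul]
    have hu_orth : ∀ i j, i ≠ j → ⟪u i, u j⟫ = 0 := by
      intro i j hij
      rw [hudef]
      dsimp only
      by_cases hi : μ i = 0
      · rw [dif_pos hi, inner_zero_left]
      by_cases hj : μ j = 0
      · rw [dif_neg hi, dif_pos hj, inner_zero_right]
      rw [dif_neg hi, dif_neg hj, real_inner_smul_left, real_inner_smul_right,
        hLL (v i) j, hvorth i j hij]
      ring
    have hu_norm : ∀ i, ‖u i‖ ≤ 1 := by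
      intro i
      rw [hudef]
      dsimp only
      by_cases h : μ i = 0
      · rw [dif_pos h, norm_zero]; norm_num
      · rw [dif_neg h, norm_smul, hLvn i, Real.norm_eq_abs,
          abs_of_pos (inv_pos.mpr (hσpos i h)), inv_mul_cancel₀ (ne_of_gt (hσpos i h))]
    have hμ1 : ∀ i, μ i ≤ 1 := by
      intro i
      have h1 : ‖L (v i)‖ ≤ matSpectralNorm A * ‖v i‖ :=
        (LinearMap.toContinuousLinearMap L).le_opNorm (v i)
      rw [hvnorm i, mul_one] at h1
      have h2 : ‖L (v i)‖ ^ 2 = μ i := by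
        rw [← hLvnorm i, real_inner_self_eq_norm_sq]
      nlinarith [norm_nonneg (L (v i))]
    have hσbounds : ∀ i, 0 ≤ σ i ∧ σ i ≤ 1 := by
      intro i
      exact ⟨hσ0 i, Real.sqrt_le_one.mpr (hμ1 i)⟩
    have hA_eq : A = TTnn u (⇑v) σ := by
      apply (Matrix.toEuclideanLin (𝕜 := ℝ) (m := Fin m) (n := Fin n)).injective
      apply v.toBasis.ext
      intro j
      rw [OrthonormalBasis.coe_toBasis]
      rw [TTnn_apply u (⇑v) σ (v j)]
      rw [Finset.sum_eq_single j]
      · rw [show ⟪v j, v j⟫ = 1 by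
          rw [real_inner_self_eq_norm_sq, hvnorm j]; norm_num, mul_one]
        exact hLv j
      · intro i _ hij
        rw [hvorth i j hij, mul_zero, zero_smul]
      · intro h; exact absurd (Finset.mem_univ j) h
    have hnuc : nuclearNorm A = ∑ i, σ i := by
      rw [nuclearNorm, Matrix.trace_mul_cycle,
        Unitary.coe_star_mul_self, one_mul, Matrix.trace_diagonal]
      simp [hσdef, hμdef]
    have hrank : ((Finset.univ.filter fun i => σ i ≠ 0).card : ℝ) ≤ (A.rank : ℝ) := by
      have hfe : (Finset.univ.filter fun i => σ i ≠ 0)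
          = (Finset.univ.filter fun i => μ i ≠ 0) := by
        apply Finset.filter_congr
        intro i _
        rw [hσdef]
        dsimp only
        constructor
        · intro h hμ; exact h (by rw [hμ, Real.sqrt_zero])
        · intro h hσeq
          exact h (le_antisymm (by nlinarith [Real.sq_sqrt (hμ0 i), hσeq]) (hμ0 i))
      have hcard : (Finset.univ.filter fun i => μ i ≠ 0).card = A.rank := by
        rw [← Matrix.rank_conjTranspose_mul_self A, hH.rank_eq_card_non_zero_eigs,
          Fintype.card_subtype]
      rw [hfe, hcard]
    exact ⟨u, v, σ, hu_orth, hu_norm, hσbounds, hA_eq, hnuc, hrank⟩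
  constructor
  · intro A hA
    obtain ⟨u, v, σ, _, _, hσb, _, hnuc, hrank⟩ := setup A hA
    rw [hnuc]
    have h1 : ∑ i, σ i = ∑ i ∈ Finset.univ.filter (fun i => σ i ≠ 0), σ i :=
      (Finset.sum_filter_of_ne fun i _ h => h).symm
    have h2 : ∑ i ∈ Finset.univ.filter (fun i => σ i ≠ 0), σ i
        ≤ ((Finset.univ.filter fun i => σ i ≠ 0).card : ℝ) := by
      have := Finset.sum_le_card_nsmul (Finset.univ.filter fun i => σ i ≠ 0) σ 1
        (fun i _ => (hσb i).2)
      simpa using this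
    linarith
  · intro g hg hgr A hA
    obtain ⟨u, v, σ, hu_orth, hu_norm, hσb, hA_eq, hnuc, _⟩ := setup A hA
    rw [hnuc, hA_eq]
    refine key_induction hu_orth hu_norm v hg hgr n σ hσb ?_
    calc (Finset.univ.filter fun i => σ i ≠ 0).card ≤ Finset.univ.card :=
          Finset.card_filter_le _ _
      _ = n := by simp

end NNAux
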